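/- Let Q be a quasi-copula on [0,1]² that lies in the linear span of copulas. Then its Minkowski norm satisfies ‖Q‖_M = 2α_Q − 1, where α_Q = sup_{n≥1} max{ max_i 2ⁿ Σ_{j=1}^{2ⁿ} V_Q(R_{ij}ⁿ)⁺ , max_j 2ⁿ Σ_{i=1}^{2ⁿ} V_Q(R_{ij}ⁿ)⁺ } and R_{ij}ⁿ = [(i−1)/2ⁿ, i/2ⁿ]×[(j−1)/2ⁿ, j/2ⁿ]. -/

import Mathlib

open Set

/-- A bivariate copula (conditions imposed on the unit square). -/
def IsCopula (C : ℝ → ℝ → ℝ) : Prop :=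
  (∀ x ∈ Icc (0:ℝ) 1, C x 0 = 0 ∧ C 0 x = 0 ∧ C x 1 = x ∧ C 1 x = x) ∧
  (∀ x₁ ∈ Icc (0:ℝ) 1, ∀ x₂ ∈ Icc (0:ℝ) 1, ∀ y₁ ∈ Icc (0:ℝ) 1, ∀ y₂ ∈ Icc (0:ℝ) 1,
    x₁ ≤ x₂ → y₁ ≤ y₂ → 0 ≤ C x₂ y₂ - C x₁ y₂ - C x₂ y₁ + C x₁ y₁)

/-- A bivariate quasi-copula (conditions imposed on the unit square). -/
def IsQuasiCopula (Q : ℝ → ℝ → ℝ) : Prop :=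
  (∀ x ∈ Icc (0:ℝ) 1, Q x 0 = 0 ∧ Q 0 x = 0 ∧ Q x 1 = x ∧ Q 1 x = x) ∧
  (∀ x₁ ∈ Icc (0:ℝ) 1, ∀ x₂ ∈ Icc (0:ℝ) 1, ∀ y ∈ Icc (0:ℝ) 1,
    x₁ ≤ x₂ → Q x₁ y ≤ Q x₂ y) ∧
  (∀ x ∈ Icc (0:ℝ) 1, ∀ y₁ ∈ Icc (0:ℝ) 1, ∀ y₂ ∈ Icc (0:ℝ) 1,
    y₁ ≤ y₂ → Q x y₁ ≤ Q x y₂) ∧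
  (∀ x₁ ∈ Icc (0:ℝ) 1, ∀ x₂ ∈ Icc (0:ℝ) 1, ∀ y₁ ∈ Icc (0:ℝ) 1, ∀ y₂ ∈ Icc (0:ℝ) 1,
    |Q x₂ y₂ - Q x₁ y₁| ≤ |x₂ - x₁| + |y₂ - y₁|)

/-- Q-volume of the dyadic rectangle R_{ij}^n = [i/2^n,(i+1)/2^n] × [j/2^n,(j+1)/2^n]
(indices shifted by one with respect to the paper). -/
noncomputable def dyadVol (Q : ℝ → ℝ → ℝ) (n : ℕ) (i j : Fin (2^n)) : ℝ :=
  Q (((i : ℕ) + 1) / 2^n) (((j : ℕ) + 1) / 2^n)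
    - Q ((i : ℕ) / 2^n) (((j : ℕ) + 1) / 2^n)
    - Q (((i : ℕ) + 1) / 2^n) ((j : ℕ) / 2^n)
    + Q ((i : ℕ) / 2^n) ((j : ℕ) / 2^n)

/-- The set of all row/column sums of positive parts of dyadic volumes, normalized by
strip width; α_Q is its supremum. -/
noncomputable def alphaSet (Q : ℝ → ℝ → ℝ) : Set ℝ :=
  {r | ∃ n : ℕ, 1 ≤ n ∧
    ((∃ i : Fin (2^n), r = 2^n * ∑ j : Fin (2^n), max (dyadVol Q n i j) 0) ∨
     (∃ j : Fin (2^n), r = 2^n * ∑ i : Fin (2^n), max (dyadVol Q n i j) 0))}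

open Finset Filter


noncomputable def lam (n : ℕ) (i : ℕ) (x : ℝ) : ℝ := min (max (x * 2^n - i) 0) 1

lemma lam_nonneg (n i : ℕ) (x : ℝ) : 0 ≤ lam n i x := by
  unfold lam; positivity

lemma lam_le_one (n i : ℕ) (x : ℝ) : lam n i x ≤ 1 := min_le_right _ _

lemma lam_mono (n i : ℕ) {x₁ x₂ : ℝ} (h : x₁ ≤ x₂) : lam n i x₁ ≤ lam n i x₂ := by
  unfold lam; gcongr

lemma lam_zero (n i : ℕ) : lam n i 0 = 0 := by
  unfold lam
  rw [max_eq_right (by simp)]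
  simp

lemma lam_one (n : ℕ) {i : ℕ} (hi : i < 2^n) : lam n i 1 = 1 := by
  unfold lam
  have h1 : (1:ℝ) ≤ 1 * 2^n - i := by
    have : (i:ℝ) + 1 ≤ 2^n := by exact_mod_cast Nat.succ_le_of_lt (by simpa using hi)
    linarith
  rw [max_eq_left (by linarith), min_eq_right h1]

lemma lam_eq (n i : ℕ) (x : ℝ) :
    lam n i x = min (x * 2^n) (i+1) - min (x * 2^n) i := by
  unfold lam
  set t := x * 2^n with ht
  rcases le_total t i with h | h
  · have e1 : min t ((i:ℝ)+1) = t := min_eq_left (by linarith)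
    have e2 : min t (i:ℝ) = t := min_eq_left h
    have e3 : max (t - i) 0 = 0 := max_eq_right (by linarith)
    rw [e1, e2, e3]; simp
  rcases le_total t ((i:ℝ)+1) with h2 | h2
  · have e1 : min t ((i:ℝ)+1) = t := min_eq_left h2
    have e2 : min t (i:ℝ) = (i:ℝ) := min_eq_right h
    have e3 : max (t - i) 0 = t - i := max_eq_left (by linarith)
    rw [e1, e2, e3, min_eq_left (by linarith : t - (i:ℝ) ≤ 1)]
  · have e1 : min t ((i:ℝ)+1) = (i:ℝ)+1 := min_eq_right h2
    have e2 : min t (i:ℝ) = (i:ℝ) := min_eq_right (by linarith)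
    have e3 : max (t - i) 0 = t - i := max_eq_left (by linarith)
    rw [e1, e2, e3, min_eq_right (by linarith : 1 ≤ t - (i:ℝ))]
    ring

lemma sum_lam (n : ℕ) {x : ℝ} (hx : x ∈ Icc (0:ℝ) 1) :
    ∑ i : Fin (2^n), lam n (i : ℕ) x = x * 2^n := by
  rw [Fin.sum_univ_eq_sum_range (fun i => lam n i x)]
  have hc : ∀ i ∈ Finset.range (2^n), lam n i x
      = min (x*2^n) (((i+1 : ℕ)):ℝ) - min (x*2^n) ((i : ℕ):ℝ) := fun i _ => by
    rw [lam_eq]; norm_cast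
  rw [Finset.sum_congr rfl hc,
    Finset.sum_range_sub (f := fun i : ℕ => min (x*2^n) (i:ℝ)) (n := 2^n)]
  have h0 : (0:ℝ) ≤ x * 2^n := by
    have := hx.1; positivity
  have h1 : x * 2^n ≤ ((2^n : ℕ) : ℝ) := by
    push_cast
    have := hx.2; nlinarith [pow_pos (show (0:ℝ)<2 by norm_num) n]
  rw [min_eq_left h1, min_eq_right (by exact_mod_cast h0)]
  push_cast
  ring

lemma sum_abs_lam_aux (n : ℕ) {x₁ x₂ : ℝ} (hx₁ : x₁ ∈ Icc (0:ℝ) 1)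
    (hx₂ : x₂ ∈ Icc (0:ℝ) 1) (h : x₁ ≤ x₂) :
    ∑ i : Fin (2^n), |lam n (i:ℕ) x₂ - lam n (i:ℕ) x₁| = (x₂ - x₁) * 2^n := by
  have hh : ∀ i : Fin (2^n), |lam n (i:ℕ) x₂ - lam n (i:ℕ) x₁|
      = lam n (i:ℕ) x₂ - lam n (i:ℕ) x₁ := fun i =>
    abs_of_nonneg (by linarith [lam_mono n (i:ℕ) h])
  rw [Finset.sum_congr rfl (fun i _ => hh i), Finset.sum_sub_distrib,
    sum_lam n hx₂, sum_lam n hx₁]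
  ring

lemma sum_abs_lam (n : ℕ) {x₁ x₂ : ℝ} (hx₁ : x₁ ∈ Icc (0:ℝ) 1)
    (hx₂ : x₂ ∈ Icc (0:ℝ) 1) :
    ∑ i : Fin (2^n), |lam n (i:ℕ) x₂ - lam n (i:ℕ) x₁| ≤ |x₂ - x₁| * 2^n := by
  rcases le_total x₁ x₂ with h | h
  · rw [sum_abs_lam_aux n hx₁ hx₂ h, abs_of_nonneg (by linarith)]
  · calc ∑ i : Fin (2^n), |lam n (i:ℕ) x₂ - lam n (i:ℕ) x₁|
        = ∑ i : Fin (2^n), |lam n (i:ℕ) x₁ - lam n (i:ℕ) x₂| := by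
          congr 1; funext i; rw [abs_sub_comm]
      _ = (x₁ - x₂) * 2^n := sum_abs_lam_aux n hx₂ hx₁ h
      _ ≤ |x₂ - x₁| * 2^n := by
          rw [abs_sub_comm, abs_of_nonneg (by linarith)]

lemma lam_dyadic (n : ℕ) (i : ℕ) (k : ℕ) :
    lam n i ((k:ℝ)/2^n) = if i < k then 1 else 0 := by
  unfold lam
  have h2 : (0:ℝ) < 2^n := by positivity
  have ht : (k:ℝ)/2^n * 2^n = k := by field_simp
  rw [ht]
  by_cases h : i < k
  · have h1 : (1:ℝ) ≤ (k:ℝ) - i := by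
      have : (i:ℝ) + 1 ≤ k := by exact_mod_cast h
      linarith
    rw [max_eq_left (by linarith), min_eq_right h1, if_pos h]
  · have h1 : (k:ℝ) - i ≤ 0 := by
      have : (k:ℝ) ≤ i := by exact_mod_cast Nat.le_of_not_lt h
      linarith
    rw [max_eq_right h1, if_neg h]
    simp
noncomputable def cb (n : ℕ) (m : Fin (2^n) → Fin (2^n) → ℝ) (x y : ℝ) : ℝ :=
  ∑ i : Fin (2^n), ∑ j : Fin (2^n), m i j * lam n i x * lam n j y

lemma cb_nonneg (n : ℕ) {m : Fin (2^n) → Fin (2^n) → ℝ}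
    (hm : ∀ i j, 0 ≤ m i j) (x y : ℝ) : 0 ≤ cb n m x y := by
  apply Finset.sum_nonneg; intro i _
  apply Finset.sum_nonneg; intro j _
  have := lam_nonneg n i x; have := lam_nonneg n j y
  have := hm i j; positivity

lemma cb_le_total (n : ℕ) {m : Fin (2^n) → Fin (2^n) → ℝ}
    (hm : ∀ i j, 0 ≤ m i j) (x y : ℝ) :
    cb n m x y ≤ ∑ i : Fin (2^n), ∑ j : Fin (2^n), m i j := by
  apply Finset.sum_le_sum; intro i _
  apply Finset.sum_le_sum; intro j _
  calc m i j * lam n i x * lam n j y ≤ m i j * 1 * 1 := by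
        apply mul_le_mul (mul_le_mul le_rfl (lam_le_one n i x) (lam_nonneg n i x) (hm i j))
          (lam_le_one n j y) (lam_nonneg n j y)
        have := hm i j; positivity
    _ = m i j := by ring

lemma cb_y_zero (n : ℕ) (m : Fin (2^n) → Fin (2^n) → ℝ) (x : ℝ) :
    cb n m x 0 = 0 := by
  unfold cb
  apply Finset.sum_eq_zero; intro i _
  apply Finset.sum_eq_zero; intro j _
  rw [lam_zero]; ring

lemma cb_x_zero (n : ℕ) (m : Fin (2^n) → Fin (2^n) → ℝ) (y : ℝ) :
    cb n m 0 y = 0 := by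
  unfold cb
  apply Finset.sum_eq_zero; intro i _
  apply Finset.sum_eq_zero; intro j _
  rw [lam_zero]; ring

lemma cb_y_one (n : ℕ) {m : Fin (2^n) → Fin (2^n) → ℝ} {c : ℝ}
    (hrow : ∀ i, ∑ j : Fin (2^n), m i j = c) {x : ℝ} (hx : x ∈ Icc (0:ℝ) 1) :
    cb n m x 1 = c * 2^n * x := by
  unfold cb
  have : ∀ i : Fin (2^n), ∑ j : Fin (2^n), m i j * lam n i x * lam n j 1
      = c * lam n i x := by
    intro i
    have : ∀ j : Fin (2^n), m i j * lam n i x * lam n j 1 = m i j * lam n i x := by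
      intro j; rw [lam_one n j.isLt]; ring
    rw [Finset.sum_congr rfl (fun j _ => this j), ← Finset.sum_mul, hrow i]
  rw [Finset.sum_congr rfl (fun i _ => this i), ← Finset.mul_sum, sum_lam n hx]
  ring

lemma cb_x_one (n : ℕ) {m : Fin (2^n) → Fin (2^n) → ℝ} {c : ℝ}
    (hcol : ∀ j, ∑ i : Fin (2^n), m i j = c) {y : ℝ} (hy : y ∈ Icc (0:ℝ) 1) :
    cb n m 1 y = c * 2^n * y := by
  unfold cb
  rw [Finset.sum_comm]
  have : ∀ j : Fin (2^n), ∑ i : Fin (2^n), m i j * lam n i 1 * lam n j y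
      = c * lam n j y := by
    intro j
    have : ∀ i : Fin (2^n), m i j * lam n i 1 * lam n j y = m i j * lam n j y := by
      intro i; rw [lam_one n i.isLt]; ring
    rw [Finset.sum_congr rfl (fun i _ => this i), ← Finset.sum_mul, hcol j]
  rw [Finset.sum_congr rfl (fun j _ => this j), ← Finset.mul_sum, sum_lam n hy]
  ring

lemma cb_rect (n : ℕ) {m : Fin (2^n) → Fin (2^n) → ℝ}
    (hm : ∀ i j, 0 ≤ m i j) {x₁ x₂ y₁ y₂ : ℝ} (hx : x₁ ≤ x₂) (hy : y₁ ≤ y₂) :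
    0 ≤ cb n m x₂ y₂ - cb n m x₁ y₂ - cb n m x₂ y₁ + cb n m x₁ y₁ := by
  unfold cb
  have key : cb n m x₂ y₂ - cb n m x₁ y₂ - cb n m x₂ y₁ + cb n m x₁ y₁
      = ∑ i : Fin (2^n), ∑ j : Fin (2^n),
        m i j * (lam n i x₂ - lam n i x₁) * (lam n j y₂ - lam n j y₁) := by
    unfold cb
    rw [← Finset.sum_sub_distrib, ← Finset.sum_sub_distrib, ← Finset.sum_add_distrib]
    apply Finset.sum_congr rfl; intro i _
    rw [← Finset.sum_sub_distrib, ← Finset.sum_sub_distrib, ← Finset.sum_add_distrib]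
    apply Finset.sum_congr rfl; intro j _
    ring
  unfold cb at key
  rw [key]
  apply Finset.sum_nonneg; intro i _
  apply Finset.sum_nonneg; intro j _
  have h1 := lam_mono n i hx
  have h2 := lam_mono n j hy
  have := hm i j
  have : (0:ℝ) ≤ lam n i x₂ - lam n i x₁ := by linarith
  have : (0:ℝ) ≤ lam n j y₂ - lam n j y₁ := by linarith
  positivity

lemma cb_lip_x (n : ℕ) {m : Fin (2^n) → Fin (2^n) → ℝ} {c : ℝ}
    (hm : ∀ i j, 0 ≤ m i j)
    (hrow : ∀ i, ∑ j : Fin (2^n), m i j ≤ c)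
    {x₁ x₂ y : ℝ} (hx₁ : x₁ ∈ Icc (0:ℝ) 1) (hx₂ : x₂ ∈ Icc (0:ℝ) 1) :
    |cb n m x₂ y - cb n m x₁ y| ≤ c * 2^n * |x₂ - x₁| := by
  have hc : 0 ≤ c := le_trans (Finset.sum_nonneg fun j _ => hm ⟨0, by positivity⟩ j) (hrow _)
  have hS : ∀ i : Fin (2^n), 0 ≤ ∑ j : Fin (2^n), m i j * lam n j y ∧
      ∑ j : Fin (2^n), m i j * lam n j y ≤ c := by
    intro i
    constructor
    · apply Finset.sum_nonneg; intro j _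
      have := hm i j; have := lam_nonneg n j y; positivity
    · refine le_trans (Finset.sum_le_sum fun j _ => ?_) (hrow i)
      calc m i j * lam n j y ≤ m i j * 1 :=
            mul_le_mul_of_nonneg_left (lam_le_one n j y) (hm i j)
        _ = m i j := mul_one _
  have e : cb n m x₂ y - cb n m x₁ y
      = ∑ i : Fin (2^n), (lam n i x₂ - lam n i x₁) * ∑ j : Fin (2^n), m i j * lam n j y := by
    unfold cb
    rw [← Finset.sum_sub_distrib]
    apply Finset.sum_congr rfl; intro i _
    rw [Finset.mul_sum, ← Finset.sum_sub_distrib]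
    apply Finset.sum_congr rfl; intro j _
    ring
  rw [e]
  calc |∑ i : Fin (2^n), (lam n i x₂ - lam n i x₁) * ∑ j : Fin (2^n), m i j * lam n j y|
      ≤ ∑ i : Fin (2^n), |(lam n i x₂ - lam n i x₁) * ∑ j : Fin (2^n), m i j * lam n j y| :=
        Finset.abs_sum_le_sum_abs _ _
    _ ≤ ∑ i : Fin (2^n), |lam n i x₂ - lam n i x₁| * c := by
        apply Finset.sum_le_sum; intro i _
        rw [abs_mul]
        exact mul_le_mul_of_nonneg_left
          (by rw [abs_of_nonneg (hS i).1]; exact (hS i).2) (abs_nonneg _)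
    _ = c * ∑ i : Fin (2^n), |lam n i x₂ - lam n i x₁| := by
        rw [← Finset.sum_mul]; ring
    _ ≤ c * (|x₂ - x₁| * 2^n) := mul_le_mul_of_nonneg_left (sum_abs_lam n hx₁ hx₂) hc
    _ = c * 2^n * |x₂ - x₁| := by ring

lemma cb_lip_y (n : ℕ) {m : Fin (2^n) → Fin (2^n) → ℝ} {c : ℝ}
    (hm : ∀ i j, 0 ≤ m i j)
    (hcol : ∀ j, ∑ i : Fin (2^n), m i j ≤ c)
    {x y₁ y₂ : ℝ} (hy₁ : y₁ ∈ Icc (0:ℝ) 1) (hy₂ : y₂ ∈ Icc (0:ℝ) 1) :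
    |cb n m x y₂ - cb n m x y₁| ≤ c * 2^n * |y₂ - y₁| := by
  have e : ∀ y, cb n m x y = cb n (fun i j => m j i) y x := by
    intro y; unfold cb; rw [Finset.sum_comm]
    apply Finset.sum_congr rfl; intro i _
    apply Finset.sum_congr rfl; intro j _
    ring
  rw [e y₂, e y₁]
  exact cb_lip_x n (fun i j => hm j i) hcol hy₁ hy₂

lemma sum_ite_range {N k : ℕ} (hk : k ≤ N) (X : ℕ → ℝ) :
    ∑ i ∈ Finset.range N, (if i < k then X i else 0) = ∑ i ∈ Finset.range k, X i := by
  rw [← Finset.sum_filter]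
  congr 1
  ext a
  simp only [Finset.mem_filter, Finset.mem_range]
  omega

lemma fin_sum_ite (N k : ℕ) (hk : k ≤ N) (X : ℕ → ℝ) :
    ∑ i : Fin N, (if (i:ℕ) < k then X (i:ℕ) else 0) = ∑ i ∈ Finset.range k, X i := by
  rw [Fin.sum_univ_eq_sum_range (fun a => if a < k then X a else 0) N]
  exact sum_ite_range hk X

lemma cb_dyadic (n : ℕ) (m : Fin (2^n) → Fin (2^n) → ℝ) (k l : ℕ) :
    cb n m ((k:ℝ)/2^n) ((l:ℝ)/2^n)
      = ∑ i : Fin (2^n), ∑ j : Fin (2^n),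
          if (i:ℕ) < k ∧ (j:ℕ) < l then m i j else 0 := by
  unfold cb
  apply Finset.sum_congr rfl; intro i _
  apply Finset.sum_congr rfl; intro j _
  rw [lam_dyadic n i k, lam_dyadic n j l]
  by_cases h1 : (i:ℕ) < k <;> by_cases h2 : (j:ℕ) < l <;> simp [h1, h2]

lemma dyad_mem (n : ℕ) {k : ℕ} (hk : k ≤ 2^n) : (k:ℝ)/2^n ∈ Icc (0:ℝ) 1 := by
  constructor
  · positivity
  · rw [div_le_one (by positivity)]
    exact_mod_cast hk

/-- boundary predicate -/
def Bdy (F : ℝ → ℝ → ℝ) : Prop :=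
  ∀ x ∈ Icc (0:ℝ) 1, F x 0 = 0 ∧ F 0 x = 0 ∧ F x 1 = x ∧ F 1 x = x

lemma dyadVol_eq (F : ℝ → ℝ → ℝ) (n : ℕ) (i j : Fin (2^n)) :
    dyadVol F n i j
      = (fun a b : ℕ => F ((a:ℝ)/2^n) ((b:ℝ)/2^n)) ((i:ℕ)+1) ((j:ℕ)+1)
        - (fun a b : ℕ => F ((a:ℝ)/2^n) ((b:ℝ)/2^n)) (i:ℕ) ((j:ℕ)+1)
        - (fun a b : ℕ => F ((a:ℝ)/2^n) ((b:ℝ)/2^n)) ((i:ℕ)+1) (j:ℕ)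
        + (fun a b : ℕ => F ((a:ℝ)/2^n) ((b:ℝ)/2^n)) (i:ℕ) (j:ℕ) := by
  unfold dyadVol
  push_cast
  rfl

lemma sum_row_vol {F : ℝ → ℝ → ℝ} (hb : Bdy F) (n : ℕ) (i : Fin (2^n)) :
    ∑ j : Fin (2^n), dyadVol F n i j = 1/2^n := by
  set G : ℕ → ℕ → ℝ := fun a b => F ((a:ℝ)/2^n) ((b:ℝ)/2^n) with hG
  have e : ∀ j : Fin (2^n), dyadVol F n i j
      = (fun b => G ((i:ℕ)+1) b - G (i:ℕ) b) (j+1) - (fun b => G ((i:ℕ)+1) b - G (i:ℕ) b) (j:ℕ) := by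
    intro j; rw [dyadVol_eq]; simp only [hG]; ring
  rw [Finset.sum_congr rfl (fun j _ => e j),
    Fin.sum_univ_eq_sum_range (fun b => (fun b => G ((i:ℕ)+1) b - G (i:ℕ) b) (b+1)
      - (fun b => G ((i:ℕ)+1) b - G (i:ℕ) b) b),
    Finset.sum_range_sub (fun b => G ((i:ℕ)+1) b - G (i:ℕ) b)]
  have h1 : ((i:ℕ):ℝ) + 1 ≤ 2^n := by exact_mod_cast i.isLt
  have hm1 : ((i:ℕ)+1 : ℝ)/2^n ∈ Icc (0:ℝ) 1 := by
    constructor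
    · positivity
    · rw [div_le_one (by positivity)]; exact h1
  have hm2 : ((i:ℕ) : ℝ)/2^n ∈ Icc (0:ℝ) 1 := by
    constructor
    · positivity
    · rw [div_le_one (by positivity)]; linarith
  have h2n : ((2^n : ℕ) : ℝ)/2^n = 1 := by
    rw [div_eq_one_iff_eq (by positivity)]; push_cast; ring
  simp only [hG]
  rw [h2n]
  have b1 := (hb _ hm1)
  have b2 := (hb _ hm2)
  push_cast
  rw [b1.2.2.1, b2.2.2.1, zero_div, b1.1, b2.1]
  field_simp
  ring

lemma sum_col_vol {F : ℝ → ℝ → ℝ} (hb : Bdy F) (n : ℕ) (j : Fin (2^n)) :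
    ∑ i : Fin (2^n), dyadVol F n i j = 1/2^n := by
  have : ∀ i : Fin (2^n), dyadVol F n i j = dyadVol (fun x y => F y x) n j i := by
    intro i; unfold dyadVol; ring
  rw [Finset.sum_congr rfl (fun i _ => this i)]
  apply sum_row_vol (F := fun x y => F y x) _ n j
  intro x hx
  obtain ⟨b1, b2, b3, b4⟩ := hb x hx
  exact ⟨b2, b1, b4, b3⟩

lemma partial_sum_vol {F : ℝ → ℝ → ℝ} (hb : Bdy F) (n : ℕ) {k l : ℕ}
    (hk : k ≤ 2^n) (hl : l ≤ 2^n) :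
    ∑ i : Fin (2^n), ∑ j : Fin (2^n),
        (if (i:ℕ) < k ∧ (j:ℕ) < l then dyadVol F n i j else 0)
      = F ((k:ℝ)/2^n) ((l:ℝ)/2^n) := by
  set G : ℕ → ℕ → ℝ := fun a b => F ((a:ℝ)/2^n) ((b:ℝ)/2^n) with hG
  set vN : ℕ → ℕ → ℝ := fun a b => G (a+1) (b+1) - G a (b+1) - G (a+1) b + G a b with hv
  have e1 : ∀ i : Fin (2^n), ∀ j : Fin (2^n),
      (if (i:ℕ) < k ∧ (j:ℕ) < l then dyadVol F n i j else 0)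
      = (if (i:ℕ) < k then (if (j:ℕ) < l then vN (i:ℕ) (j:ℕ) else 0) else 0) := by
    intro i j
    have : dyadVol F n i j = vN (i:ℕ) (j:ℕ) := dyadVol_eq F n i j
    rw [this]
    by_cases h1 : (i:ℕ) < k <;> by_cases h2 : (j:ℕ) < l <;> simp [h1, h2]
  rw [Finset.sum_congr rfl (fun i _ => Finset.sum_congr rfl (fun j _ => e1 i j))]
  have e2 : ∀ i : Fin (2^n),
      ∑ j : Fin (2^n), (if (i:ℕ) < k then (if (j:ℕ) < l then vN (i:ℕ) (j:ℕ) else 0) else 0)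
      = (if (i:ℕ) < k then (∑ b ∈ Finset.range l, vN (i:ℕ) b) else 0) := by
    intro i
    by_cases h1 : (i:ℕ) < k
    · simp only [if_pos h1]
      exact fin_sum_ite (2^n) l hl (fun b => vN (i:ℕ) b)
    · simp [h1]
  rw [Finset.sum_congr rfl (fun i _ => e2 i),
    fin_sum_ite (2^n) k hk (fun a => ∑ b ∈ Finset.range l, vN a b)]
  have e3 : ∀ a : ℕ, ∑ b ∈ Finset.range l, vN a b
      = (fun a => G a l - G a 0) (a+1) - (fun a => G a l - G a 0) a := by
    intro a
    have : ∀ b : ℕ, vN a b = (fun b => G (a+1) b - G a b) (b+1) - (fun b => G (a+1) b - G a b) b := by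
      intro b; simp only [hv]; ring
    rw [Finset.sum_congr rfl (fun b _ => this b),
      Finset.sum_range_sub (fun b => G (a+1) b - G a b)]
    simp only []
    ring
  rw [Finset.sum_congr rfl (fun a _ => e3 a),
    Finset.sum_range_sub (fun a => G a l - G a 0)]
  have hkm : (k:ℝ)/2^n ∈ Icc (0:ℝ) 1 := dyad_mem n hk
  have hlm : (l:ℝ)/2^n ∈ Icc (0:ℝ) 1 := dyad_mem n hl
  simp only [hG]
  have z : ((0:ℕ):ℝ)/2^n = 0 := by norm_num
  rw [z]
  rw [(hb _ hkm).1, (hb _ hlm).2.1, (hb 0 (by constructor <;> norm_num)).1]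
  ring
noncomputable def sig (Q : ℝ → ℝ → ℝ) : ℝ := sSup (alphaSet Q)
noncomputable def vp (Q : ℝ → ℝ → ℝ) (n : ℕ) (i j : Fin (2^n)) : ℝ := max (dyadVol Q n i j) 0
noncomputable def vm (Q : ℝ → ℝ → ℝ) (n : ℕ) (i j : Fin (2^n)) : ℝ := max (-(dyadVol Q n i j)) 0
noncomputable def rr (Q : ℝ → ℝ → ℝ) (n : ℕ) (i : Fin (2^n)) : ℝ := ∑ j : Fin (2^n), vp Q n i j
noncomputable def ccol (Q : ℝ → ℝ → ℝ) (n : ℕ) (j : Fin (2^n)) : ℝ := ∑ i : Fin (2^n), vp Q n i j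
noncomputable def TT (Q : ℝ → ℝ → ℝ) (n : ℕ) : ℝ := ∑ i : Fin (2^n), rr Q n i
noncomputable def dd (Q : ℝ → ℝ → ℝ) (n : ℕ) (i j : Fin (2^n)) : ℝ :=
  (sig Q/2^n - rr Q n i) * (sig Q/2^n - ccol Q n j) / (sig Q - TT Q n)
noncomputable def pp (Q : ℝ → ℝ → ℝ) (n : ℕ) (i j : Fin (2^n)) : ℝ := vp Q n i j + dd Q n i j
noncomputable def qq (Q : ℝ → ℝ → ℝ) (n : ℕ) (i j : Fin (2^n)) : ℝ := vm Q n i j + dd Q n i j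

lemma vp_sub_vm (Q : ℝ → ℝ → ℝ) (n : ℕ) (i j : Fin (2^n)) :
    vp Q n i j - vm Q n i j = dyadVol Q n i j := by
  unfold vp vm
  rcases le_total (dyadVol Q n i j) 0 with h | h
  · rw [max_eq_right h, max_eq_left (by linarith)]; ring
  · rw [max_eq_left h, max_eq_right (by linarith)]; ring

lemma alpha_nonempty (Q : ℝ → ℝ → ℝ) : (alphaSet Q).Nonempty :=
  ⟨2^1 * ∑ j : Fin (2^1), max (dyadVol Q 1 0 j) 0, 1, le_refl 1, Or.inl ⟨0, rfl⟩⟩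

lemma copula_vol_nonneg {A : ℝ → ℝ → ℝ} (hA : IsCopula A) (n : ℕ) (i j : Fin (2^n)) :
    0 ≤ dyadVol A n i j := by
  have h1 : ((i:ℕ):ℝ)/2^n ∈ Icc (0:ℝ) 1 := dyad_mem n (le_of_lt i.isLt)
  have h2 : (((i:ℕ)+1 : ℕ):ℝ)/2^n ∈ Icc (0:ℝ) 1 := dyad_mem n i.isLt
  have h3 : ((j:ℕ):ℝ)/2^n ∈ Icc (0:ℝ) 1 := dyad_mem n (le_of_lt j.isLt)
  have h4 : (((j:ℕ)+1 : ℕ):ℝ)/2^n ∈ Icc (0:ℝ) 1 := dyad_mem n j.isLt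
  push_cast at h2 h4
  have := hA.2 _ h1 _ h2 _ h3 _ h4 (by apply div_le_div_of_nonneg_right (by linarith) (by positivity)) (by apply div_le_div_of_nonneg_right (by linarith) (by positivity))
  unfold dyadVol
  linarith [this]

lemma dyadVol_span {Q A B : ℝ → ℝ → ℝ} {α β : ℝ}
    (hs : ∀ x ∈ Icc (0:ℝ) 1, ∀ y ∈ Icc (0:ℝ) 1, Q x y = α * A x y + β * B x y)
    (n : ℕ) (i j : Fin (2^n)) :
    dyadVol Q n i j = α * dyadVol A n i j + β * dyadVol B n i j := by
  have h1 : ((i:ℕ):ℝ)/2^n ∈ Icc (0:ℝ) 1 := dyad_mem n (le_of_lt i.isLt)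
  have h2 : (((i:ℕ)+1 : ℕ):ℝ)/2^n ∈ Icc (0:ℝ) 1 := dyad_mem n i.isLt
  have h3 : ((j:ℕ):ℝ)/2^n ∈ Icc (0:ℝ) 1 := dyad_mem n (le_of_lt j.isLt)
  have h4 : (((j:ℕ)+1 : ℕ):ℝ)/2^n ∈ Icc (0:ℝ) 1 := dyad_mem n j.isLt
  push_cast at h2 h4
  unfold dyadVol
  rw [hs _ h2 _ h4, hs _ h1 _ h4, hs _ h2 _ h3, hs _ h1 _ h3]
  ring

lemma alpha_bddAbove {Q : ℝ → ℝ → ℝ}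
    (hspan : ∃ (A B : ℝ → ℝ → ℝ) (α β : ℝ), IsCopula A ∧ IsCopula B ∧
      ∀ x ∈ Icc (0:ℝ) 1, ∀ y ∈ Icc (0:ℝ) 1, Q x y = α * A x y + β * B x y) :
    BddAbove (alphaSet Q) := by
  obtain ⟨A, B, α, β, hA, hB, hs⟩ := hspan
  refine ⟨|α| + |β|, fun r hr => ?_⟩
  obtain ⟨n, hn, hcase⟩ := hr
  have key : ∀ i j : Fin (2^n), max (dyadVol Q n i j) 0
      ≤ |α| * dyadVol A n i j + |β| * dyadVol B n i j := by
    intro i j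
    have ha := copula_vol_nonneg hA n i j
    have hb := copula_vol_nonneg hB n i j
    rw [dyadVol_span hs n i j]
    apply max_le
    · nlinarith [le_abs_self α, le_abs_self β]
    · positivity
  have h2n : (0:ℝ) < 2^n := by positivity
  rcases hcase with ⟨i, hi⟩ | ⟨j, hj⟩
  · rw [hi]
    calc (2:ℝ)^n * ∑ j : Fin (2^n), max (dyadVol Q n i j) 0
        ≤ 2^n * ∑ j : Fin (2^n), (|α| * dyadVol A n i j + |β| * dyadVol B n i j) := by
          apply mul_le_mul_of_nonneg_left (Finset.sum_le_sum fun j _ => key i j) (le_of_lt h2n)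
      _ = 2^n * (|α| * (1/2^n) + |β| * (1/2^n)) := by
          rw [Finset.sum_add_distrib, ← Finset.mul_sum, ← Finset.mul_sum,
            sum_row_vol (show Bdy A from hA.1) n i, sum_row_vol (show Bdy B from hB.1) n i]
      _ = |α| + |β| := by field_simp
  · rw [hj]
    calc (2:ℝ)^n * ∑ i : Fin (2^n), max (dyadVol Q n i j) 0
        ≤ 2^n * ∑ i : Fin (2^n), (|α| * dyadVol A n i j + |β| * dyadVol B n i j) := by
          apply mul_le_mul_of_nonneg_left (Finset.sum_le_sum fun i _ => key i j) (le_of_lt h2n)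
      _ = 2^n * (|α| * (1/2^n) + |β| * (1/2^n)) := by
          rw [Finset.sum_add_distrib, ← Finset.mul_sum, ← Finset.mul_sum,
            sum_col_vol (show Bdy A from hA.1) n j, sum_col_vol (show Bdy B from hB.1) n j]
      _ = |α| + |β| := by field_simp

lemma sig_ge_one {Q : ℝ → ℝ → ℝ} (hb : Bdy Q) (hbdd : BddAbove (alphaSet Q)) :
    1 ≤ sig Q := by
  have hmem : (2:ℝ)^1 * ∑ j : Fin (2^1), max (dyadVol Q 1 0 j) 0 ∈ alphaSet Q :=
    ⟨1, le_refl 1, Or.inl ⟨0, rfl⟩⟩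
  have h1 : (1:ℝ) ≤ 2^1 * ∑ j : Fin (2^1), max (dyadVol Q 1 0 j) 0 := by
    have : ∑ j : Fin (2^1), dyadVol Q 1 0 j ≤ ∑ j : Fin (2^1), max (dyadVol Q 1 0 j) 0 :=
      Finset.sum_le_sum fun j _ => le_max_left _ _
    rw [sum_row_vol hb 1 0] at this
    norm_num at this ⊢
    linarith
  exact le_trans h1 (le_csSup hbdd hmem)

lemma row_le {Q : ℝ → ℝ → ℝ} (hbdd : BddAbove (alphaSet Q)) {n : ℕ} (hn : 1 ≤ n)
    (i : Fin (2^n)) : rr Q n i ≤ sig Q / 2^n := by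
  have hmem : (2:ℝ)^n * ∑ j : Fin (2^n), max (dyadVol Q n i j) 0 ∈ alphaSet Q :=
    ⟨n, hn, Or.inl ⟨i, rfl⟩⟩
  have := le_csSup hbdd hmem
  rw [le_div_iff₀ (by positivity : (0:ℝ) < 2^n)]
  unfold rr vp sig
  linarith [this]

lemma col_le {Q : ℝ → ℝ → ℝ} (hbdd : BddAbove (alphaSet Q)) {n : ℕ} (hn : 1 ≤ n)
    (j : Fin (2^n)) : ccol Q n j ≤ sig Q / 2^n := by
  have hmem : (2:ℝ)^n * ∑ i : Fin (2^n), max (dyadVol Q n i j) 0 ∈ alphaSet Q :=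
    ⟨n, hn, Or.inr ⟨j, rfl⟩⟩
  have := le_csSup hbdd hmem
  rw [le_div_iff₀ (by positivity : (0:ℝ) < 2^n)]
  unfold ccol vp sig
  linarith [this]

lemma TT_le {Q : ℝ → ℝ → ℝ} (hbdd : BddAbove (alphaSet Q)) {n : ℕ} (hn : 1 ≤ n) :
    TT Q n ≤ sig Q := by
  unfold TT
  calc ∑ i : Fin (2^n), rr Q n i ≤ ∑ _i : Fin (2^n), sig Q / 2^n :=
        Finset.sum_le_sum fun i _ => row_le hbdd hn i
    _ = (2^n : ℕ) * (sig Q / 2^n) := by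
        rw [Finset.sum_const, Finset.card_univ, Fintype.card_fin, nsmul_eq_mul]
    _ = sig Q := by push_cast; field_simp

lemma sum_ccol (Q : ℝ → ℝ → ℝ) (n : ℕ) : ∑ j : Fin (2^n), ccol Q n j = TT Q n := by
  unfold ccol TT rr
  exact Finset.sum_comm

lemma rr_eq_of_TT {Q : ℝ → ℝ → ℝ} (hbdd : BddAbove (alphaSet Q)) {n : ℕ} (hn : 1 ≤ n)
    (hT : sig Q - TT Q n = 0) : ∀ i : Fin (2^n), rr Q n i = sig Q / 2^n := by
  have hsum : ∑ i : Fin (2^n), (sig Q / 2^n - rr Q n i) = 0 := by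
    rw [Finset.sum_sub_distrib, Finset.sum_const, Finset.card_univ, Fintype.card_fin,
      nsmul_eq_mul]
    have : ((2^n : ℕ) : ℝ) * (sig Q / 2^n) = sig Q := by push_cast; field_simp
    rw [this]
    unfold TT at hT
    linarith
  have := (Finset.sum_eq_zero_iff_of_nonneg
    (fun i _ => by linarith [row_le hbdd hn i])).1 hsum
  intro i
  have := this i (Finset.mem_univ i)
  linarith

lemma ccol_eq_of_TT {Q : ℝ → ℝ → ℝ} (hbdd : BddAbove (alphaSet Q)) {n : ℕ} (hn : 1 ≤ n)
    (hT : sig Q - TT Q n = 0) : ∀ j : Fin (2^n), ccol Q n j = sig Q / 2^n := by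
  have hsum : ∑ j : Fin (2^n), (sig Q / 2^n - ccol Q n j) = 0 := by
    rw [Finset.sum_sub_distrib, Finset.sum_const, Finset.card_univ, Fintype.card_fin,
      nsmul_eq_mul, sum_ccol]
    have : ((2^n : ℕ) : ℝ) * (sig Q / 2^n) = sig Q := by push_cast; field_simp
    rw [this]
    linarith
  have := (Finset.sum_eq_zero_iff_of_nonneg
    (fun j _ => by linarith [col_le hbdd hn j])).1 hsum
  intro j
  have := this j (Finset.mem_univ j)
  linarith

lemma dd_nonneg {Q : ℝ → ℝ → ℝ} (hbdd : BddAbove (alphaSet Q)) {n : ℕ} (hn : 1 ≤ n)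
    (i j : Fin (2^n)) : 0 ≤ dd Q n i j := by
  unfold dd
  apply div_nonneg
  · have := row_le hbdd hn i
    have := col_le hbdd hn j
    nlinarith
  · linarith [TT_le hbdd hn]

lemma sum_dd_row {Q : ℝ → ℝ → ℝ} (hbdd : BddAbove (alphaSet Q)) {n : ℕ} (hn : 1 ≤ n)
    (i : Fin (2^n)) : ∑ j : Fin (2^n), dd Q n i j = sig Q / 2^n - rr Q n i := by
  unfold dd
  rw [← Finset.sum_div, ← Finset.mul_sum]
  have hcc : ∑ j : Fin (2^n), (sig Q/2^n - ccol Q n j) = sig Q - TT Q n := by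
    rw [Finset.sum_sub_distrib, Finset.sum_const, Finset.card_univ, Fintype.card_fin,
      nsmul_eq_mul, sum_ccol]
    have : ((2^n : ℕ) : ℝ) * (sig Q / 2^n) = sig Q := by push_cast; field_simp
    rw [this]
  rw [hcc]
  by_cases hT : sig Q - TT Q n = 0
  · rw [hT]
    have := rr_eq_of_TT hbdd hn hT i
    rw [this]
    simp
  · rw [mul_div_assoc, div_self hT, mul_one]

lemma sum_dd_col {Q : ℝ → ℝ → ℝ} (hbdd : BddAbove (alphaSet Q)) {n : ℕ} (hn : 1 ≤ n)
    (j : Fin (2^n)) : ∑ i : Fin (2^n), dd Q n i j = sig Q / 2^n - ccol Q n j := by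
  unfold dd
  rw [← Finset.sum_div]
  have : ∑ i : Fin (2^n), (sig Q/2^n - rr Q n i) * (sig Q/2^n - ccol Q n j)
      = (∑ i : Fin (2^n), (sig Q/2^n - rr Q n i)) * (sig Q/2^n - ccol Q n j) := by
    rw [Finset.sum_mul]
  rw [this]
  have hrr : ∑ i : Fin (2^n), (sig Q/2^n - rr Q n i) = sig Q - TT Q n := by
    rw [Finset.sum_sub_distrib, Finset.sum_const, Finset.card_univ, Fintype.card_fin,
      nsmul_eq_mul]
    have : ((2^n : ℕ) : ℝ) * (sig Q / 2^n) = sig Q := by push_cast; field_simp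
    rw [this]
    rfl
  rw [hrr]
  by_cases hT : sig Q - TT Q n = 0
  · rw [hT]
    have := ccol_eq_of_TT hbdd hn hT j
    rw [this]
    simp
  · rw [mul_comm (sig Q - TT Q n), mul_div_assoc, div_self hT, mul_one]

lemma pp_nonneg {Q : ℝ → ℝ → ℝ} (hbdd : BddAbove (alphaSet Q)) {n : ℕ} (hn : 1 ≤ n)
    (i j : Fin (2^n)) : 0 ≤ pp Q n i j := by
  unfold pp
  have := dd_nonneg hbdd hn i j
  have : (0:ℝ) ≤ vp Q n i j := le_max_right _ _
  unfold vp at this ⊢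
  linarith [dd_nonneg hbdd hn i j]

lemma qq_nonneg {Q : ℝ → ℝ → ℝ} (hbdd : BddAbove (alphaSet Q)) {n : ℕ} (hn : 1 ≤ n)
    (i j : Fin (2^n)) : 0 ≤ qq Q n i j := by
  unfold qq
  have h1 : (0:ℝ) ≤ vm Q n i j := le_max_right _ _
  linarith [dd_nonneg hbdd hn i j]

lemma pp_sub_qq (Q : ℝ → ℝ → ℝ) (n : ℕ) (i j : Fin (2^n)) :
    pp Q n i j - qq Q n i j = dyadVol Q n i j := by
  unfold pp qq
  have := vp_sub_vm Q n i j
  linarith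

lemma sum_pp_row {Q : ℝ → ℝ → ℝ} (hbdd : BddAbove (alphaSet Q)) {n : ℕ} (hn : 1 ≤ n)
    (i : Fin (2^n)) : ∑ j : Fin (2^n), pp Q n i j = sig Q / 2^n := by
  unfold pp
  rw [Finset.sum_add_distrib, sum_dd_row hbdd hn i]
  have : ∑ j : Fin (2^n), vp Q n i j = rr Q n i := rfl
  rw [this]; ring

lemma sum_pp_col {Q : ℝ → ℝ → ℝ} (hbdd : BddAbove (alphaSet Q)) {n : ℕ} (hn : 1 ≤ n)
    (j : Fin (2^n)) : ∑ i : Fin (2^n), pp Q n i j = sig Q / 2^n := by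
  unfold pp
  rw [Finset.sum_add_distrib, sum_dd_col hbdd hn j]
  have : ∑ i : Fin (2^n), vp Q n i j = ccol Q n j := rfl
  rw [this]; ring

lemma sum_vm_row {Q : ℝ → ℝ → ℝ} (hb : Bdy Q) (n : ℕ) (i : Fin (2^n)) :
    ∑ j : Fin (2^n), vm Q n i j = rr Q n i - 1/2^n := by
  have : ∀ j : Fin (2^n), vm Q n i j = vp Q n i j - dyadVol Q n i j := by
    intro j; linarith [vp_sub_vm Q n i j]
  rw [Finset.sum_congr rfl (fun j _ => this j), Finset.sum_sub_distrib,
    sum_row_vol hb n i]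
  rfl

lemma sum_vm_col {Q : ℝ → ℝ → ℝ} (hb : Bdy Q) (n : ℕ) (j : Fin (2^n)) :
    ∑ i : Fin (2^n), vm Q n i j = ccol Q n j - 1/2^n := by
  have : ∀ i : Fin (2^n), vm Q n i j = vp Q n i j - dyadVol Q n i j := by
    intro i; linarith [vp_sub_vm Q n i j]
  rw [Finset.sum_congr rfl (fun i _ => this i), Finset.sum_sub_distrib,
    sum_col_vol hb n j]
  rfl

lemma sum_qq_row {Q : ℝ → ℝ → ℝ} (hb : Bdy Q) (hbdd : BddAbove (alphaSet Q)) {n : ℕ}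
    (hn : 1 ≤ n) (i : Fin (2^n)) :
    ∑ j : Fin (2^n), qq Q n i j = (sig Q - 1) / 2^n := by
  unfold qq
  rw [Finset.sum_add_distrib, sum_dd_row hbdd hn i, sum_vm_row hb n i]
  ring

lemma sum_qq_col {Q : ℝ → ℝ → ℝ} (hb : Bdy Q) (hbdd : BddAbove (alphaSet Q)) {n : ℕ}
    (hn : 1 ≤ n) (j : Fin (2^n)) :
    ∑ i : Fin (2^n), qq Q n i j = (sig Q - 1) / 2^n := by
  unfold qq
  rw [Finset.sum_add_distrib, sum_dd_col hbdd hn j, sum_vm_col hb n j]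
  ring

lemma total_pp {Q : ℝ → ℝ → ℝ} (hbdd : BddAbove (alphaSet Q)) {n : ℕ} (hn : 1 ≤ n) :
    ∑ i : Fin (2^n), ∑ j : Fin (2^n), pp Q n i j = sig Q := by
  rw [Finset.sum_congr rfl (fun i _ => sum_pp_row hbdd hn i), Finset.sum_const,
    Finset.card_univ, Fintype.card_fin, nsmul_eq_mul]
  push_cast; field_simp

lemma total_qq {Q : ℝ → ℝ → ℝ} (hb : Bdy Q) (hbdd : BddAbove (alphaSet Q)) {n : ℕ}
    (hn : 1 ≤ n) :
    ∑ i : Fin (2^n), ∑ j : Fin (2^n), qq Q n i j = sig Q - 1 := by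
  rw [Finset.sum_congr rfl (fun i _ => sum_qq_row hb hbdd hn i), Finset.sum_const,
    Finset.card_univ, Fintype.card_fin, nsmul_eq_mul]
  push_cast; field_simp
noncomputable def BB (Q : ℝ → ℝ → ℝ) (n : ℕ) (x y : ℝ) : ℝ := cb n (pp Q n) x y / sig Q
noncomputable def CCf (Q : ℝ → ℝ → ℝ) (n : ℕ) (x y : ℝ) : ℝ :=
  if 1 < sig Q then cb n (qq Q n) x y / (sig Q - 1) else x * y

section level
variable {Q : ℝ → ℝ → ℝ} (hb : Bdy Q) (hbdd : BddAbove (alphaSet Q)) {n : ℕ} (hn : 1 ≤ n)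

lemma sig_pos (hb : Bdy Q) (hbdd : BddAbove (alphaSet Q)) : (0:ℝ) < sig Q :=
  lt_of_lt_of_le one_pos (sig_ge_one hb hbdd)

lemma CCf_eq_pos {n : ℕ} (h : 1 < sig Q) (x y : ℝ) :
    CCf Q n x y = cb n (qq Q n) x y / (sig Q - 1) := by
  unfold CCf; rw [if_pos h]

lemma CCf_eq_neg {n : ℕ} (h : ¬ 1 < sig Q) (x y : ℝ) :
    CCf Q n x y = x * y := by
  unfold CCf; rw [if_neg h]

include hb hbdd hn

lemma isCopula_BB : IsCopula (BB Q n) := by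
  have hσ := sig_ge_one hb hbdd
  have hσ0 : sig Q ≠ 0 := by linarith
  constructor
  · intro x hx
    refine ⟨?_, ?_, ?_, ?_⟩
    · unfold BB; rw [cb_y_zero]; simp
    · unfold BB; rw [cb_x_zero]; simp
    · unfold BB
      rw [cb_y_one n (fun i => sum_pp_row hbdd hn i) hx]
      field_simp
    · unfold BB
      rw [cb_x_one n (fun j => sum_pp_col hbdd hn j) hx]
      field_simp
  · intro x₁ _ x₂ _ y₁ _ y₂ _ hx hy
    have h := cb_rect n (fun i j => pp_nonneg hbdd hn i j) hx hy
    unfold BB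
    have e : cb n (pp Q n) x₂ y₂ / sig Q - cb n (pp Q n) x₁ y₂ / sig Q
        - cb n (pp Q n) x₂ y₁ / sig Q + cb n (pp Q n) x₁ y₁ / sig Q
        = (cb n (pp Q n) x₂ y₂ - cb n (pp Q n) x₁ y₂
          - cb n (pp Q n) x₂ y₁ + cb n (pp Q n) x₁ y₁) / sig Q := by ring
    rw [e]
    positivity

lemma isCopula_CCf : IsCopula (CCf Q n) := by
  have hσ := sig_ge_one hb hbdd
  by_cases h : 1 < sig Q
  · have hσ1 : sig Q - 1 ≠ 0 := by linarith
    constructor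
    · intro x hx
      rw [CCf_eq_pos h, CCf_eq_pos h, CCf_eq_pos h, CCf_eq_pos h]
      refine ⟨?_, ?_, ?_, ?_⟩
      · rw [cb_y_zero]; simp
      · rw [cb_x_zero]; simp
      · rw [cb_y_one n (fun i => sum_qq_row hb hbdd hn i) hx]
        field_simp
      · rw [cb_x_one n (fun j => sum_qq_col hb hbdd hn j) hx]
        field_simp
    · intro x₁ _ x₂ _ y₁ _ y₂ _ hx hy
      have hr := cb_rect n (fun i j => qq_nonneg hbdd hn i j) hx hy
      rw [CCf_eq_pos h, CCf_eq_pos h, CCf_eq_pos h, CCf_eq_pos h]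
      have e : cb n (qq Q n) x₂ y₂ / (sig Q - 1) - cb n (qq Q n) x₁ y₂ / (sig Q - 1)
          - cb n (qq Q n) x₂ y₁ / (sig Q - 1) + cb n (qq Q n) x₁ y₁ / (sig Q - 1)
          = (cb n (qq Q n) x₂ y₂ - cb n (qq Q n) x₁ y₂
            - cb n (qq Q n) x₂ y₁ + cb n (qq Q n) x₁ y₁) / (sig Q - 1) := by ring
      rw [e]
      have : (0:ℝ) < sig Q - 1 := by linarith
      positivity
  · constructor
    · intro x hx
      rw [CCf_eq_neg h, CCf_eq_neg h, CCf_eq_neg h, CCf_eq_neg h]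
      refine ⟨by ring, by ring, by ring, by ring⟩
    · intro x₁ _ x₂ _ y₁ _ y₂ _ hx hy
      rw [CCf_eq_neg h, CCf_eq_neg h, CCf_eq_neg h, CCf_eq_neg h]
      nlinarith

lemma BB_mem {x y : ℝ} (hx : x ∈ Icc (0:ℝ) 1) (hy : y ∈ Icc (0:ℝ) 1) :
    BB Q n x y ∈ Icc (0:ℝ) 1 := by
  have hσ := sig_ge_one hb hbdd
  have h0 : (0:ℝ) < sig Q := by linarith
  constructor
  · unfold BB
    apply div_nonneg (cb_nonneg n (fun i j => pp_nonneg hbdd hn i j) x y) (le_of_lt h0)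
  · unfold BB
    rw [div_le_one h0]
    calc cb n (pp Q n) x y ≤ ∑ i : Fin (2^n), ∑ j : Fin (2^n), pp Q n i j :=
          cb_le_total n (fun i j => pp_nonneg hbdd hn i j) x y
      _ = sig Q := total_pp hbdd hn

lemma CCf_mem {x y : ℝ} (hx : x ∈ Icc (0:ℝ) 1) (hy : y ∈ Icc (0:ℝ) 1) :
    CCf Q n x y ∈ Icc (0:ℝ) 1 := by
  by_cases h : 1 < sig Q
  · rw [CCf_eq_pos h]
    have h0 : (0:ℝ) < sig Q - 1 := by linarith
    constructor
    · apply div_nonneg (cb_nonneg n (fun i j => qq_nonneg hbdd hn i j) x y) (le_of_lt h0)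
    · rw [div_le_one h0]
      calc cb n (qq Q n) x y ≤ ∑ i : Fin (2^n), ∑ j : Fin (2^n), qq Q n i j :=
            cb_le_total n (fun i j => qq_nonneg hbdd hn i j) x y
        _ = sig Q - 1 := total_qq hb hbdd hn
  · rw [CCf_eq_neg h]
    constructor
    · nlinarith [hx.1, hy.1]
    · nlinarith [hx.1, hy.1, hx.2, hy.2]

lemma BB_lip {x₁ x₂ y₁ y₂ : ℝ} (hx₁ : x₁ ∈ Icc (0:ℝ) 1) (hx₂ : x₂ ∈ Icc (0:ℝ) 1)
    (hy₁ : y₁ ∈ Icc (0:ℝ) 1) (hy₂ : y₂ ∈ Icc (0:ℝ) 1) :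
    |BB Q n x₂ y₂ - BB Q n x₁ y₁| ≤ |x₂ - x₁| + |y₂ - y₁| := by
  have hσ := sig_ge_one hb hbdd
  have h0 : (0:ℝ) < sig Q := by linarith
  have hpn : ∀ i j : Fin (2^n), 0 ≤ pp Q n i j := fun i j => pp_nonneg hbdd hn i j
  have hx := cb_lip_x n hpn (fun i => le_of_eq (sum_pp_row hbdd hn i)) (y := y₂) hx₁ hx₂
  have hy := cb_lip_y n hpn (fun j => le_of_eq (sum_pp_col hbdd hn j)) (x := x₁) hy₁ hy₂
  have hd : sig Q / 2^n * 2^n = sig Q := by field_simp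
  rw [hd] at hx hy
  unfold BB
  rw [div_sub_div_same, abs_div, abs_of_pos h0, div_le_iff₀ h0]
  calc |cb n (pp Q n) x₂ y₂ - cb n (pp Q n) x₁ y₁|
      ≤ |cb n (pp Q n) x₂ y₂ - cb n (pp Q n) x₁ y₂|
        + |cb n (pp Q n) x₁ y₂ - cb n (pp Q n) x₁ y₁| := by
        have := abs_sub_abs_le_abs_sub (cb n (pp Q n) x₂ y₂) (cb n (pp Q n) x₁ y₁)
        exact abs_sub_le _ _ _
    _ ≤ sig Q * |x₂ - x₁| + sig Q * |y₂ - y₁| := add_le_add hx hy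
    _ = (|x₂ - x₁| + |y₂ - y₁|) * sig Q := by ring

lemma CCf_lip {x₁ x₂ y₁ y₂ : ℝ} (hx₁ : x₁ ∈ Icc (0:ℝ) 1) (hx₂ : x₂ ∈ Icc (0:ℝ) 1)
    (hy₁ : y₁ ∈ Icc (0:ℝ) 1) (hy₂ : y₂ ∈ Icc (0:ℝ) 1) :
    |CCf Q n x₂ y₂ - CCf Q n x₁ y₁| ≤ |x₂ - x₁| + |y₂ - y₁| := by
  by_cases h : 1 < sig Q
  · rw [CCf_eq_pos h, CCf_eq_pos h]
    have h0 : (0:ℝ) < sig Q - 1 := by linarith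
    have hqn : ∀ i j : Fin (2^n), 0 ≤ qq Q n i j := fun i j => qq_nonneg hbdd hn i j
    have hx := cb_lip_x n hqn (fun i => le_of_eq (sum_qq_row hb hbdd hn i)) (y := y₂) hx₁ hx₂
    have hy := cb_lip_y n hqn (fun j => le_of_eq (sum_qq_col hb hbdd hn j)) (x := x₁) hy₁ hy₂
    have hd : (sig Q - 1) / 2^n * 2^n = sig Q - 1 := by field_simp
    rw [hd] at hx hy
    rw [div_sub_div_same, abs_div, abs_of_pos h0, div_le_iff₀ h0]
    calc |cb n (qq Q n) x₂ y₂ - cb n (qq Q n) x₁ y₁|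
        ≤ |cb n (qq Q n) x₂ y₂ - cb n (qq Q n) x₁ y₂|
          + |cb n (qq Q n) x₁ y₂ - cb n (qq Q n) x₁ y₁| := abs_sub_le _ _ _
      _ ≤ (sig Q - 1) * |x₂ - x₁| + (sig Q - 1) * |y₂ - y₁| := add_le_add hx hy
      _ = (|x₂ - x₁| + |y₂ - y₁|) * (sig Q - 1) := by ring
  · rw [CCf_eq_neg h, CCf_eq_neg h]
    calc |x₂ * y₂ - x₁ * y₁| ≤ |x₂ * y₂ - x₁ * y₂| + |x₁ * y₂ - x₁ * y₁| := abs_sub_le _ _ _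
      _ = |x₂ - x₁| * |y₂| + |x₁| * |y₂ - y₁| := by rw [← abs_mul, ← abs_mul]; ring_nf
      _ ≤ |x₂ - x₁| * 1 + 1 * |y₂ - y₁| := by
          apply add_le_add
          · apply mul_le_mul_of_nonneg_left _ (abs_nonneg _)
            rw [abs_le]; exact ⟨by linarith [hy₂.1], hy₂.2⟩
          · apply mul_le_mul_of_nonneg_right _ (abs_nonneg _)
            rw [abs_le]; exact ⟨by linarith [hx₁.1], hx₁.2⟩
      _ = |x₂ - x₁| + |y₂ - y₁| := by ring

lemma grid_id {k l : ℕ} (hk : k ≤ 2^n) (hl : l ≤ 2^n) :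
    sig Q * BB Q n ((k:ℝ)/2^n) ((l:ℝ)/2^n)
      - (sig Q - 1) * CCf Q n ((k:ℝ)/2^n) ((l:ℝ)/2^n)
      = Q ((k:ℝ)/2^n) ((l:ℝ)/2^n) := by
  have hσ := sig_ge_one hb hbdd
  have hσ0 : sig Q ≠ 0 := by linarith
  set x := (k:ℝ)/2^n
  set y := (l:ℝ)/2^n
  have stepA : sig Q * BB Q n x y - (sig Q - 1) * CCf Q n x y
      = cb n (pp Q n) x y - cb n (qq Q n) x y := by
    by_cases h : 1 < sig Q
    · rw [CCf_eq_pos h]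
      unfold BB
      have hσ1 : sig Q - 1 ≠ 0 := by linarith
      field_simp
    · rw [CCf_eq_neg h]
      unfold BB
      have hσ1 : sig Q = 1 := le_antisymm (not_lt.1 h) hσ
      have hq0 : ∀ i j : Fin (2^n), qq Q n i j = 0 := by
        have htot : ∑ i : Fin (2^n), ∑ j : Fin (2^n), qq Q n i j = 0 := by
          rw [total_qq hb hbdd hn, hσ1]; ring
        have h1 := (Finset.sum_eq_zero_iff_of_nonneg
          (fun i _ => Finset.sum_nonneg fun j _ => qq_nonneg hbdd hn i j)).1 htot
        intro i j
        have h2 := (Finset.sum_eq_zero_iff_of_nonneg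
          (fun j _ => qq_nonneg hbdd hn i j)).1 (h1 i (Finset.mem_univ i))
        exact h2 j (Finset.mem_univ j)
      have hcbq : cb n (qq Q n) x y = 0 := by
        unfold cb
        apply Finset.sum_eq_zero; intro i _
        apply Finset.sum_eq_zero; intro j _
        rw [hq0 i j]; ring
      rw [hcbq, hσ1]
      ring
  rw [stepA, cb_dyadic n (pp Q n) k l, cb_dyadic n (qq Q n) k l,
    ← Finset.sum_sub_distrib]
  have e : ∀ i : Fin (2^n),
      (∑ j : Fin (2^n), if (i:ℕ) < k ∧ (j:ℕ) < l then pp Q n i j else 0)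
      - (∑ j : Fin (2^n), if (i:ℕ) < k ∧ (j:ℕ) < l then qq Q n i j else 0)
      = ∑ j : Fin (2^n), if (i:ℕ) < k ∧ (j:ℕ) < l then dyadVol Q n i j else 0 := by
    intro i
    rw [← Finset.sum_sub_distrib]
    apply Finset.sum_congr rfl; intro j _
    by_cases hc : (i:ℕ) < k ∧ (j:ℕ) < l
    · simp only [if_pos hc]; exact pp_sub_qq Q n i j
    · simp only [if_neg hc]; ring
  rw [Finset.sum_congr rfl (fun i _ => e i)]
  exact partial_sum_vol hb n hk hl

end level
open Classical in
noncomputable def ulim (u : Ultrafilter ℕ) (f : ℕ → ℝ) : ℝ :=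
  if h : ∃ c, Filter.Tendsto f (u : Filter ℕ) (nhds c) then h.choose else 0

lemma ulim_spec (u : Ultrafilter ℕ) {f : ℕ → ℝ} (hf : ∀ n, f n ∈ Icc (0:ℝ) 1) :
    Filter.Tendsto f (u : Filter ℕ) (nhds (ulim u f)) := by
  have hmap : ↑(u.map f) ≤ Filter.principal (Icc (0:ℝ) 1) := by
    rw [Ultrafilter.coe_map, Filter.le_principal_iff, Filter.mem_map]
    exact Filter.Eventually.filter_mono le_rfl (Filter.Eventually.of_forall hf)
  obtain ⟨c, _, hc⟩ := (isCompact_Icc (a := (0:ℝ)) (b := 1)).ultrafilter_le_nhds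
    (u.map f) hmap
  have hex : ∃ c, Filter.Tendsto f (u : Filter ℕ) (nhds c) := ⟨c, hc⟩
  unfold ulim
  rw [dif_pos hex]
  exact hex.choose_spec

lemma dyad_approx {x : ℝ} (hx : x ∈ Icc (0:ℝ) 1) (m : ℕ) :
    ∃ k : ℕ, k ≤ 2^m ∧ |x - (k:ℝ)/2^m| ≤ 1/2^m := by
  refine ⟨⌊x * 2^m⌋₊, ?_, ?_⟩
  · have h1 : x * 2^m ≤ ((2^m : ℕ) : ℝ) := by
      push_cast
      nlinarith [hx.2, pow_pos (show (0:ℝ) < 2 by norm_num) m]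
    calc ⌊x * 2^m⌋₊ ≤ ⌊((2^m : ℕ) : ℝ)⌋₊ := Nat.floor_le_floor (by exact_mod_cast h1)
      _ = 2^m := Nat.floor_natCast _
  · have h0 : (0:ℝ) ≤ x * 2^m := by nlinarith [hx.1, pow_pos (show (0:ℝ) < 2 by norm_num) m]
    have hf1 : ((⌊x * 2^m⌋₊ : ℕ) : ℝ) ≤ x * 2^m := Nat.floor_le h0
    have hf2 : x * 2^m < (⌊x * 2^m⌋₊ : ℕ) + 1 := Nat.lt_floor_add_one _
    have h2 : (0:ℝ) < 2^m := by positivity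
    have e : x - (⌊x * 2^m⌋₊ : ℝ)/2^m = (x*2^m - ⌊x * 2^m⌋₊)/2^m := by field_simp
    rw [e, abs_div, abs_of_pos h2]
    gcongr
    rw [abs_le]
    constructor <;> linarith

lemma pow_half_tendsto (c : ℝ) :
    Filter.Tendsto (fun m : ℕ => c * (1/2:ℝ)^m) Filter.atTop (nhds 0) := by
  have := tendsto_pow_atTop_nhds_zero_of_lt_one (show (0:ℝ) ≤ 1/2 by norm_num)
    (show (1/2:ℝ) < 1 by norm_num)
  have h := this.const_mul c
  simpa using h
theorem stmt16 (Q : ℝ → ℝ → ℝ) (hQ : IsQuasiCopula Q)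
    (hspan : ∃ (A B : ℝ → ℝ → ℝ) (α β : ℝ), IsCopula A ∧ IsCopula B ∧
      ∀ x ∈ Icc (0:ℝ) 1, ∀ y ∈ Icc (0:ℝ) 1, Q x y = α * A x y + β * B x y) :
    IsLeast {r : ℝ | ∃ s t : ℝ, ∃ B C : ℝ → ℝ → ℝ,
        0 ≤ s ∧ 0 ≤ t ∧ IsCopula B ∧ IsCopula C ∧
        (∀ x ∈ Icc (0:ℝ) 1, ∀ y ∈ Icc (0:ℝ) 1,
          Q x y = s * B x y - t * C x y) ∧ r = s + t}
      (2 * sSup (alphaSet Q) - 1) := by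
  have hb : Bdy Q := hQ.1
  have hbdd : BddAbove (alphaSet Q) := alpha_bddAbove hspan
  have hσ1 : 1 ≤ sig Q := sig_ge_one hb hbdd
  have hσ0 : (0:ℝ) < sig Q := by linarith
  have h0m : (0:ℝ) ∈ Icc (0:ℝ) 1 := by constructor <;> norm_num
  have h1m : (1:ℝ) ∈ Icc (0:ℝ) 1 := by constructor <;> norm_num
  constructor
  · -- membership : construct optimal representation
    obtain ⟨u, hu⟩ := Filter.exists_ultrafilter_le (Filter.atTop : Filter ℕ)
    set Bf : ℝ → ℝ → ℝ := fun x y => ulim u (fun n => BB Q (n+1) x y) with hBf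
    set Cf : ℝ → ℝ → ℝ := fun x y => ulim u (fun n => CCf Q (n+1) x y) with hCf
    have hnn : ∀ n : ℕ, 1 ≤ n + 1 := fun n => Nat.succ_le_succ (Nat.zero_le n)
    have hBt : ∀ x ∈ Icc (0:ℝ) 1, ∀ y ∈ Icc (0:ℝ) 1,
        Filter.Tendsto (fun n => BB Q (n+1) x y) (u : Filter ℕ) (nhds (Bf x y)) :=
      fun x hx y hy => ulim_spec u (fun n => BB_mem hb hbdd (hnn n) hx hy)
    have hCt : ∀ x ∈ Icc (0:ℝ) 1, ∀ y ∈ Icc (0:ℝ) 1,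
        Filter.Tendsto (fun n => CCf Q (n+1) x y) (u : Filter ℕ) (nhds (Cf x y)) :=
      fun x hx y hy => ulim_spec u (fun n => CCf_mem hb hbdd (hnn n) hx hy)
    have hBcop : IsCopula Bf := by
      constructor
      · intro x hx
        refine ⟨?_, ?_, ?_, ?_⟩
        · refine tendsto_nhds_unique (hBt x hx 0 h0m) ?_
          have he : (fun n => BB Q (n+1) x 0) = fun _ => (0:ℝ) :=
            funext fun n => ((isCopula_BB hb hbdd (hnn n)).1 x hx).1
          rw [he]; exact tendsto_const_nhds
        · refine tendsto_nhds_unique (hBt 0 h0m x hx) ?_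
          have he : (fun n => BB Q (n+1) 0 x) = fun _ => (0:ℝ) :=
            funext fun n => ((isCopula_BB hb hbdd (hnn n)).1 x hx).2.1
          rw [he]; exact tendsto_const_nhds
        · refine tendsto_nhds_unique (hBt x hx 1 h1m) ?_
          have he : (fun n => BB Q (n+1) x 1) = fun _ => x :=
            funext fun n => ((isCopula_BB hb hbdd (hnn n)).1 x hx).2.2.1
          rw [he]; exact tendsto_const_nhds
        · refine tendsto_nhds_unique (hBt 1 h1m x hx) ?_
          have he : (fun n => BB Q (n+1) 1 x) = fun _ => x :=
            funext fun n => ((isCopula_BB hb hbdd (hnn n)).1 x hx).2.2.2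
          rw [he]; exact tendsto_const_nhds
      · intro x₁ hx₁ x₂ hx₂ y₁ hy₁ y₂ hy₂ h12x h12y
        have ht := (((hBt x₂ hx₂ y₂ hy₂).sub (hBt x₁ hx₁ y₂ hy₂)).sub
          (hBt x₂ hx₂ y₁ hy₁)).add (hBt x₁ hx₁ y₁ hy₁)
        exact ge_of_tendsto ht (Filter.Eventually.of_forall fun n =>
          (isCopula_BB hb hbdd (hnn n)).2 x₁ hx₁ x₂ hx₂ y₁ hy₁ y₂ hy₂ h12x h12y)
    have hCcop : IsCopula Cf := by
      constructor
      · intro x hx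
        refine ⟨?_, ?_, ?_, ?_⟩
        · refine tendsto_nhds_unique (hCt x hx 0 h0m) ?_
          have he : (fun n => CCf Q (n+1) x 0) = fun _ => (0:ℝ) :=
            funext fun n => ((isCopula_CCf hb hbdd (hnn n)).1 x hx).1
          rw [he]; exact tendsto_const_nhds
        · refine tendsto_nhds_unique (hCt 0 h0m x hx) ?_
          have he : (fun n => CCf Q (n+1) 0 x) = fun _ => (0:ℝ) :=
            funext fun n => ((isCopula_CCf hb hbdd (hnn n)).1 x hx).2.1
          rw [he]; exact tendsto_const_nhds
        · refine tendsto_nhds_unique (hCt x hx 1 h1m) ?_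
          have he : (fun n => CCf Q (n+1) x 1) = fun _ => x :=
            funext fun n => ((isCopula_CCf hb hbdd (hnn n)).1 x hx).2.2.1
          rw [he]; exact tendsto_const_nhds
        · refine tendsto_nhds_unique (hCt 1 h1m x hx) ?_
          have he : (fun n => CCf Q (n+1) 1 x) = fun _ => x :=
            funext fun n => ((isCopula_CCf hb hbdd (hnn n)).1 x hx).2.2.2
          rw [he]; exact tendsto_const_nhds
      · intro x₁ hx₁ x₂ hx₂ y₁ hy₁ y₂ hy₂ h12x h12y
        have ht := (((hCt x₂ hx₂ y₂ hy₂).sub (hCt x₁ hx₁ y₂ hy₂)).sub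
          (hCt x₂ hx₂ y₁ hy₁)).add (hCt x₁ hx₁ y₁ hy₁)
        exact ge_of_tendsto ht (Filter.Eventually.of_forall fun n =>
          (isCopula_CCf hb hbdd (hnn n)).2 x₁ hx₁ x₂ hx₂ y₁ hy₁ y₂ hy₂ h12x h12y)
    have hBlip : ∀ x₁ ∈ Icc (0:ℝ) 1, ∀ x₂ ∈ Icc (0:ℝ) 1, ∀ y₁ ∈ Icc (0:ℝ) 1,
        ∀ y₂ ∈ Icc (0:ℝ) 1, |Bf x₂ y₂ - Bf x₁ y₁| ≤ |x₂ - x₁| + |y₂ - y₁| := by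
      intro x₁ hx₁ x₂ hx₂ y₁ hy₁ y₂ hy₂
      have ht := ((hBt x₂ hx₂ y₂ hy₂).sub (hBt x₁ hx₁ y₁ hy₁)).abs
      exact le_of_tendsto ht (Filter.Eventually.of_forall fun n =>
        BB_lip hb hbdd (hnn n) hx₁ hx₂ hy₁ hy₂)
    have hClip : ∀ x₁ ∈ Icc (0:ℝ) 1, ∀ x₂ ∈ Icc (0:ℝ) 1, ∀ y₁ ∈ Icc (0:ℝ) 1,
        ∀ y₂ ∈ Icc (0:ℝ) 1, |Cf x₂ y₂ - Cf x₁ y₁| ≤ |x₂ - x₁| + |y₂ - y₁| := by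
      intro x₁ hx₁ x₂ hx₂ y₁ hy₁ y₂ hy₂
      have ht := ((hCt x₂ hx₂ y₂ hy₂).sub (hCt x₁ hx₁ y₁ hy₁)).abs
      exact le_of_tendsto ht (Filter.Eventually.of_forall fun n =>
        CCf_lip hb hbdd (hnn n) hx₁ hx₂ hy₁ hy₂)
    have hdy : ∀ (m k l : ℕ), k ≤ 2^m → l ≤ 2^m →
        sig Q * Bf ((k:ℝ)/2^m) ((l:ℝ)/2^m) - (sig Q - 1) * Cf ((k:ℝ)/2^m) ((l:ℝ)/2^m)
          = Q ((k:ℝ)/2^m) ((l:ℝ)/2^m) := by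
      intro m k l hk hl
      have hxm := dyad_mem m hk
      have hym := dyad_mem m hl
      have ht := ((hBt _ hxm _ hym).const_mul (sig Q)).sub
        ((hCt _ hxm _ hym).const_mul (sig Q - 1))
      have hev : ∀ᶠ n in (u : Filter ℕ),
          sig Q * BB Q (n+1) ((k:ℝ)/2^m) ((l:ℝ)/2^m)
            - (sig Q - 1) * CCf Q (n+1) ((k:ℝ)/2^m) ((l:ℝ)/2^m)
          = Q ((k:ℝ)/2^m) ((l:ℝ)/2^m) := by
        apply Filter.Eventually.filter_mono hu
        rw [Filter.eventually_atTop]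
        refine ⟨m, fun n hn => ?_⟩
        have hpow : (2:ℝ)^(n+1) = 2^(n+1-m) * 2^m := by
          rw [← pow_add]; congr 1; omega
        have e1 : ((k:ℝ))/2^m = ((k * 2^(n+1-m) : ℕ) : ℝ)/2^(n+1) := by
          push_cast
          rw [hpow]
          have hm2 : (0:ℝ) < 2^m := by positivity
          have hm3 : (0:ℝ) < (2:ℝ)^(n+1-m) := by positivity
          field_simp
        have e2 : ((l:ℝ))/2^m = ((l * 2^(n+1-m) : ℕ) : ℝ)/2^(n+1) := by
          push_cast
          rw [hpow]
          have hm2 : (0:ℝ) < 2^m := by positivity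
          have hm3 : (0:ℝ) < (2:ℝ)^(n+1-m) := by positivity
          field_simp
        have hnk : k * 2^(n+1-m) ≤ 2^(n+1) := by
          calc k * 2^(n+1-m) ≤ 2^m * 2^(n+1-m) := Nat.mul_le_mul_right _ hk
            _ = 2^(n+1) := by rw [← pow_add]; congr 1; omega
        have hnl : l * 2^(n+1-m) ≤ 2^(n+1) := by
          calc l * 2^(n+1-m) ≤ 2^m * 2^(n+1-m) := Nat.mul_le_mul_right _ hl
            _ = 2^(n+1) := by rw [← pow_add]; congr 1; omega
        rw [e1, e2]
        exact grid_id hb hbdd (hnn n) hnk hnl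
      have ht2 := ht.congr' hev
      exact tendsto_nhds_unique ht2 tendsto_const_nhds
    have tri : ∀ a b c : ℝ, |a - b - c| ≤ |a| + |b| + |c| := by
      intro a b c
      have h1 : |a - b - c| ≤ |a - b| + |c| := by
        have := abs_add_le (a - b) (-c)
        rw [abs_neg] at this
        simpa [sub_eq_add_neg] using this
      have h2 : |a - b| ≤ |a| + |b| := by
        have := abs_add_le a (-b)
        rw [abs_neg] at this
        simpa [sub_eq_add_neg] using this
      linarith
    have hid : ∀ x ∈ Icc (0:ℝ) 1, ∀ y ∈ Icc (0:ℝ) 1,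
        Q x y = sig Q * Bf x y - (sig Q - 1) * Cf x y := by
      intro x hx y hy
      have key : ∀ m : ℕ, |sig Q * Bf x y - (sig Q - 1) * Cf x y - Q x y|
          ≤ (4 * sig Q) * (1/2:ℝ)^m := by
        intro m
        obtain ⟨k, hk, hkx⟩ := dyad_approx hx m
        obtain ⟨l, hl, hly⟩ := dyad_approx hy m
        have hxm := dyad_mem m hk
        have hym := dyad_mem m hl
        set xm := (k:ℝ)/2^m with hxm'
        set ym := (l:ℝ)/2^m with hym'
        have h1 := hBlip xm hxm x hx ym hym y hy
        have h2 := hClip xm hxm x hx ym hym y hy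
        have h3 := hQ.2.2.2 xm hxm x hx ym hym y hy
        have h0 := hdy m k l hk hl
        have hsplit : sig Q * Bf x y - (sig Q - 1) * Cf x y - Q x y
            = sig Q * (Bf x y - Bf xm ym) - (sig Q - 1) * (Cf x y - Cf xm ym)
              - (Q x y - Q xm ym) := by
          linear_combination h0
        have hD : |x - xm| + |y - ym| ≤ 2 * (1/2:ℝ)^m := by
          have e : (1/2:ℝ)^m = 1/2^m := by rw [one_div_pow]
          rw [e]
          linarith
        calc |sig Q * Bf x y - (sig Q - 1) * Cf x y - Q x y|
            = |sig Q * (Bf x y - Bf xm ym) - (sig Q - 1) * (Cf x y - Cf xm ym)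
              - (Q x y - Q xm ym)| := by rw [hsplit]
          _ ≤ |sig Q * (Bf x y - Bf xm ym)| + |(sig Q - 1) * (Cf x y - Cf xm ym)|
              + |Q x y - Q xm ym| := tri _ _ _
          _ = sig Q * |Bf x y - Bf xm ym| + (sig Q - 1) * |Cf x y - Cf xm ym|
              + |Q x y - Q xm ym| := by
              rw [abs_mul, abs_mul, abs_of_pos hσ0, abs_of_nonneg (by linarith : (0:ℝ) ≤ sig Q - 1)]
          _ ≤ sig Q * (|x - xm| + |y - ym|) + (sig Q - 1) * (|x - xm| + |y - ym|)
              + (|x - xm| + |y - ym|) := by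
              have g1 := mul_le_mul_of_nonneg_left h1 (le_of_lt hσ0)
              have g2 := mul_le_mul_of_nonneg_left h2 (by linarith : (0:ℝ) ≤ sig Q - 1)
              linarith
          _ = 2 * sig Q * (|x - xm| + |y - ym|) := by ring
          _ ≤ 2 * sig Q * (2 * (1/2:ℝ)^m) := by
              apply mul_le_mul_of_nonneg_left hD (by linarith)
          _ = (4 * sig Q) * (1/2:ℝ)^m := by ring
      have hle : |sig Q * Bf x y - (sig Q - 1) * Cf x y - Q x y| ≤ 0 :=
        ge_of_tendsto (pow_half_tendsto (4 * sig Q)) (Filter.Eventually.of_forall key)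
      have : sig Q * Bf x y - (sig Q - 1) * Cf x y - Q x y = 0 :=
        abs_eq_zero.1 (le_antisymm hle (abs_nonneg _))
      linarith
    refine ⟨sig Q, sig Q - 1, Bf, Cf, by linarith, by linarith, hBcop, hCcop, hid, ?_⟩
    show 2 * sSup (alphaSet Q) - 1 = sig Q + (sig Q - 1)
    rw [show sig Q = sSup (alphaSet Q) from rfl]
    ring
  · -- lower bound
    rintro r ⟨s, t, Bc, Cc, hs, ht, hBc, hCc, hrep, hr_eq⟩
    have hQ11 : Q 1 1 = 1 := (hQ.1 1 h1m).2.2.1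
    have hB11 : Bc 1 1 = 1 := (hBc.1 1 h1m).2.2.1
    have hC11 : Cc 1 1 = 1 := (hCc.1 1 h1m).2.2.1
    have hst : s - t = 1 := by
      have := hrep 1 h1m 1 h1m
      rw [hQ11, hB11, hC11] at this
      linarith
    have hs' : ∀ x ∈ Icc (0:ℝ) 1, ∀ y ∈ Icc (0:ℝ) 1,
        Q x y = s * Bc x y + (-t) * Cc x y := by
      intro x hx y hy
      rw [hrep x hx y hy]; ring
    have hub : ∀ a ∈ alphaSet Q, a ≤ s := by
      intro a ha
      obtain ⟨n, hn, hcase⟩ := ha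
      have key : ∀ i j : Fin (2^n), max (dyadVol Q n i j) 0 ≤ s * dyadVol Bc n i j := by
        intro i j
        rw [dyadVol_span hs' n i j]
        have hvB := copula_vol_nonneg hBc n i j
        have hvC := copula_vol_nonneg hCc n i j
        apply max_le
        · nlinarith
        · exact mul_nonneg hs hvB
      have h2n : (0:ℝ) < 2^n := by positivity
      rcases hcase with ⟨i, hi⟩ | ⟨j, hj⟩
      · rw [hi]
        calc (2:ℝ)^n * ∑ j : Fin (2^n), max (dyadVol Q n i j) 0
            ≤ 2^n * ∑ j : Fin (2^n), s * dyadVol Bc n i j :=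
              mul_le_mul_of_nonneg_left (Finset.sum_le_sum fun j _ => key i j) (le_of_lt h2n)
          _ = 2^n * (s * (1/2^n)) := by
              rw [← Finset.mul_sum, sum_row_vol (show Bdy Bc from hBc.1) n i]
          _ = s := by field_simp
      · rw [hj]
        calc (2:ℝ)^n * ∑ i : Fin (2^n), max (dyadVol Q n i j) 0
            ≤ 2^n * ∑ i : Fin (2^n), s * dyadVol Bc n i j :=
              mul_le_mul_of_nonneg_left (Finset.sum_le_sum fun i _ => key i j) (le_of_lt h2n)
          _ = 2^n * (s * (1/2^n)) := by
              rw [← Finset.mul_sum, sum_col_vol (show Bdy Bc from hBc.1) n j]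
          _ = s := by field_simp
    have hsup : sSup (alphaSet Q) ≤ s := csSup_le (alpha_nonempty Q) hub
    rw [hr_eq]
    linarith
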